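/- Let σ₁ > σ₂ > ... > σ_m > 0 and consider the lower-triangular cascade system ρ_i(x,t) solving ρ_{i,t} = σ_i ρ_{i,x} + Σ_{j<i} ω_{i,j}(x) ρ_j(x,t) on [0,1] with ρ_i(1,t) = 0, where ω_{i,j} are bounded continuous functions. Then every component ρ_i vanishes identically for t ≥ 1/σ_m; i.e., the whole state converges to zero in finite time 1/σ_m. -/

import Mathlib

open Set

open Filter Topology


lemma deriv_nonpos_of_right' {f : ℝ → ℝ} {d a δ : ℝ} (hδ : 0 < δ)
    (hd : HasDerivAt f d a) (h : ∀ y ∈ Ioc a (a + δ), f y ≤ f a) : d ≤ 0 := by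
  have hs : Filter.Tendsto (slope f a) (nhdsWithin a (Ioi a)) (nhds d) :=
    (hasDerivAt_iff_tendsto_slope.mp hd).mono_left
      (nhdsWithin_mono a fun x hx => (ne_of_gt hx : x ≠ a))
  refine le_of_tendsto hs ?_
  filter_upwards [Ioc_mem_nhdsGT_of_mem
    (show a ∈ Ico a (a + δ) from ⟨le_refl a, by linarith⟩)] with y hy
  have h1 : f y - f a ≤ 0 := sub_nonpos.mpr (h y hy)
  have h2 : (0:ℝ) ≤ y - a := by have := hy.1; linarith
  rw [slope_def_field]
  exact div_nonpos_of_nonpos_of_nonneg h1 h2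

lemma deriv_nonneg_of_left' {f : ℝ → ℝ} {d a δ : ℝ} (hδ : 0 < δ)
    (hd : HasDerivAt f d a) (h : ∀ y ∈ Ico (a - δ) a, f y ≤ f a) : 0 ≤ d := by
  have hs : Filter.Tendsto (slope f a) (nhdsWithin a (Iio a)) (nhds d) :=
    (hasDerivAt_iff_tendsto_slope.mp hd).mono_left
      (nhdsWithin_mono a fun x hx => (ne_of_lt hx : x ≠ a))
  refine ge_of_tendsto hs ?_
  filter_upwards [Ico_mem_nhdsLT_of_mem
    (show a ∈ Ioc (a - δ) a from ⟨by linarith, le_refl a⟩)] with y hy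
  have h1 : f y - f a ≤ 0 := sub_nonpos.mpr (h y hy)
  have h2 : y - a ≤ 0 := by have := hy.2; linarith
  rw [slope_def_field]
  exact div_nonneg_iff.mpr (Or.inr ⟨h1, h2⟩)

lemma core' {σ τ T M K ε : ℝ} {u ux : ℝ → ℝ → ℝ}
    (hσ : 0 < σ) (hτ : σ ≤ τ) (hM : 0 ≤ M) (hK : 0 ≤ K) (hε : 0 < ε)
    (hu : Continuous fun p : ℝ × ℝ => u p.1 p.2)
    (hux : ∀ x ∈ Icc (0:ℝ) 1, ∀ t ∈ Icc (0:ℝ) T, HasDerivAt (fun x' => u x' t) (ux x t) x)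
    (hut : ∀ x ∈ Icc (0:ℝ) 1, ∀ t ∈ Icc (0:ℝ) T, 1 - x ≤ τ * t →
      HasDerivAt (fun t' => u x t') (σ * ux x t) t)
    (hMb : ∀ x ∈ Icc (0:ℝ) 1, ∀ t ∈ Icc (0:ℝ) T, u x t ≤ M)
    (hb : ∀ t ∈ Icc (0:ℝ) T, u 1 t = 0) :
    ∀ x ∈ Icc (0:ℝ) 1, ∀ t ∈ Icc (0:ℝ) T, 1 - x ≤ τ * t →
      u x t ≤ M * Real.exp (-K * (t - (1 - x) / σ)) + ε * t := by
  intro x0 hx0 t0 ht0 hc0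
  have hτp : (0:ℝ) < τ := lt_of_lt_of_le hσ hτ
  set D : Set (ℝ × ℝ) := (Icc (0:ℝ) 1 ×ˢ Icc (0:ℝ) T) ∩ {p | 1 - p.1 ≤ τ * p.2} with hDdef
  set F : ℝ × ℝ → ℝ :=
    fun p => u p.1 p.2 - M * Real.exp (-K * (p.2 - (1 - p.1) / σ)) - ε * p.2 with hFdef
  have hFc : Continuous F := by
    have hin : Continuous fun p : ℝ × ℝ => -K * (p.2 - (1 - p.1) / σ) :=
      continuous_const.mul (continuous_snd.sub ((continuous_const.sub continuous_fst).div_const σ))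
    exact (hu.sub (continuous_const.mul (Real.continuous_exp.comp hin))).sub
      (continuous_const.mul continuous_snd)
  have hDcpt : IsCompact D :=
    (isCompact_Icc.prod isCompact_Icc).inter_right
      (isClosed_le (continuous_const.sub continuous_fst) (continuous_const.mul continuous_snd))
  have hp0D : (x0, t0) ∈ D := ⟨mem_prod.mpr ⟨hx0, ht0⟩, hc0⟩
  obtain ⟨p, hpD, hmax⟩ := hDcpt.exists_isMaxOn ⟨(x0, t0), hp0D⟩ hFc.continuousOn
  have hmaxle : ∀ q ∈ D, F q ≤ F p := fun q hq => hmax hq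
  suffices hFp : F p ≤ 0 by
    have h1 : F (x0, t0) ≤ 0 := le_trans (hmaxle (x0, t0) hp0D) hFp
    simp only [hFdef] at h1
    linarith
  obtain ⟨x1, t1⟩ := p
  obtain ⟨hprod, hc1⟩ := hpD
  obtain ⟨hx1, ht1⟩ := mem_prod.mp hprod
  have hc1 : 1 - x1 ≤ τ * t1 := hc1
  by_cases hxe : x1 = 1
  · subst hxe
    have h0 : u 1 t1 = 0 := hb t1 ht1
    have h1 : 0 ≤ M * Real.exp (-K * (t1 - (1 - 1) / σ)) :=
      mul_nonneg hM (Real.exp_nonneg _)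
    have h2 : 0 ≤ ε * t1 := mul_nonneg hε.le ht1.1
    simp only [hFdef]
    rw [h0]
    linarith
  by_cases hre : t1 - (1 - x1) / σ ≤ 0
  · have hE : 1 ≤ Real.exp (-K * (t1 - (1 - x1) / σ)) := by
      apply Real.one_le_exp
      nlinarith
    have h1 : u x1 t1 ≤ M := hMb x1 hx1 t1 ht1
    have h2 : 0 ≤ ε * t1 := mul_nonneg hε.le ht1.1
    simp only [hFdef]
    nlinarith
  -- interior case: derive a contradiction
  exfalso
  push_neg at hre
  have hx1' : x1 < 1 := lt_of_le_of_ne hx1.2 hxe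
  have hx1n : (0:ℝ) < 1 - x1 := by linarith
  have ht1p : 0 < t1 := by
    have : (0:ℝ) ≤ (1 - x1) / σ := div_nonneg hx1n.le hσ.le
    linarith
  have hσt : 1 - x1 < t1 * σ := (div_lt_iff₀ hσ).mp (by linarith)
  set δ : ℝ := min (min (1 - x1) t1) ((τ * t1 - (1 - x1)) / τ) with hδdef
  have hstrict : 1 - x1 < τ * t1 := by nlinarith
  have hδp : 0 < δ :=
    lt_min (lt_min hx1n ht1p) (div_pos (by linarith) hτp)
  have hδ1 : δ ≤ 1 - x1 := le_trans (min_le_left _ _) (min_le_left _ _)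
  have hδ2 : δ ≤ t1 := le_trans (min_le_left _ _) (min_le_right _ _)
  have hδ3 : δ ≤ (τ * t1 - (1 - x1)) / τ := min_le_right _ _
  have hδ3' : τ * δ ≤ τ * t1 - (1 - x1) := by
    rw [mul_comm]
    exact (le_div_iff₀ hτp).mp hδ3
  -- x-direction derivative at the max point
  have hgx : HasDerivAt (fun y : ℝ => -K * (t1 - (1 - y) / σ)) (-K * (1 / σ)) x1 := by
    have h0 : HasDerivAt (fun y : ℝ => t1 - (1 - y) / σ) (1 / σ) x1 := by
      have h := (((hasDerivAt_id x1).const_sub 1).div_const σ).const_sub t1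
      refine h.congr_deriv ?_
      ring
    exact h0.const_mul (-K)
  have hwx : HasDerivAt (fun y : ℝ => M * Real.exp (-K * (t1 - (1 - y) / σ)))
      (M * (Real.exp (-K * (t1 - (1 - x1) / σ)) * (-K * (1 / σ)))) x1 :=
    (hgx.exp).const_mul M
  have hdx : HasDerivAt
      (fun y : ℝ => u y t1 - M * Real.exp (-K * (t1 - (1 - y) / σ)) - ε * t1)
      (ux x1 t1 + M * (Real.exp (-K * (t1 - (1 - x1) / σ)) * (K / σ))) x1 := by
    have h2 := ((hux x1 hx1 t1 ht1).sub hwx).sub_const (ε * t1)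
    refine h2.congr_deriv ?_
    ring
  have hDx : ux x1 t1 + M * (Real.exp (-K * (t1 - (1 - x1) / σ)) * (K / σ)) ≤ 0 := by
    refine deriv_nonpos_of_right' hδp hdx ?_
    intro y hy
    have hyD : (y, t1) ∈ D := by
      refine ⟨mem_prod.mpr ⟨⟨?_, ?_⟩, ht1⟩, ?_⟩
      · linarith [hy.1, hx1.1]
      · linarith [hy.2, hδ1]
      · show 1 - y ≤ τ * t1
        linarith [hy.1]
    have := hmaxle (y, t1) hyD
    simpa [hFdef] using this
  -- t-direction derivative at the max point
  have hgt : HasDerivAt (fun s : ℝ => -K * (s - (1 - x1) / σ)) (-K * 1) t1 :=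
    ((hasDerivAt_id t1).sub_const ((1 - x1) / σ)).const_mul (-K)
  have hwt : HasDerivAt (fun s : ℝ => M * Real.exp (-K * (s - (1 - x1) / σ)))
      (M * (Real.exp (-K * (t1 - (1 - x1) / σ)) * (-K * 1))) t1 :=
    (hgt.exp).const_mul M
  have hεt : HasDerivAt (fun s : ℝ => ε * s) ε t1 := by
    simpa using (hasDerivAt_id t1).const_mul ε
  have hdt : HasDerivAt
      (fun s : ℝ => u x1 s - M * Real.exp (-K * (s - (1 - x1) / σ)) - ε * s)
      (σ * ux x1 t1 + M * (Real.exp (-K * (t1 - (1 - x1) / σ)) * K) - ε) t1 := by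
    have h2 := ((hut x1 hx1 t1 ht1 hc1).sub hwt).sub hεt
    refine h2.congr_deriv ?_
    ring
  have hDt : 0 ≤ σ * ux x1 t1 + M * (Real.exp (-K * (t1 - (1 - x1) / σ)) * K) - ε := by
    refine deriv_nonneg_of_left' hδp hdt ?_
    intro s hs
    have hs5 : τ * (t1 - δ) ≤ τ * s := mul_le_mul_of_nonneg_left (by linarith [hs.1]) hτp.le
    have hsD : (x1, s) ∈ D := by
      refine ⟨mem_prod.mpr ⟨hx1, ⟨?_, ?_⟩⟩, ?_⟩
      · linarith [hs.1, hδ2]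
      · linarith [hs.2, ht1.2]
      · show 1 - x1 ≤ τ * s
        nlinarith
    have := hmaxle (x1, s) hsD
    simpa [hFdef] using this
  -- combine
  have hexpand : σ * (ux x1 t1 + M * (Real.exp (-K * (t1 - (1 - x1) / σ)) * (K / σ)))
      = σ * ux x1 t1 + M * (Real.exp (-K * (t1 - (1 - x1) / σ)) * K) := by
    field_simp
  have hmul : σ * (ux x1 t1 + M * (Real.exp (-K * (t1 - (1 - x1) / σ)) * (K / σ))) ≤ 0 :=
    mul_nonpos_iff.mpr (Or.inl ⟨hσ.le, hDx⟩)
  rw [hexpand] at hmul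
  linarith

/-- Lower-triangular transport cascade `ρ_{i,t} = σ_i ρ_{i,x} +
Σ_{j<i} ω_{i,j}(x) ρ_j` on `[0,1]` with `ρ_i(1,t) = 0` and
`σ₁ > σ₂ > ⋯ > σ_m > 0`: every component vanishes identically for
`t ≥ 1/σ_m`. -/
theorem stmt4 (m : ℕ) (hm : 0 < m) (σ : Fin m → ℝ)
    (hpos : ∀ i, 0 < σ i) (hdec : ∀ i j : Fin m, i < j → σ j < σ i)
    (ω : Fin m → Fin m → ℝ → ℝ)
    (hωc : ∀ i j, Continuous (ω i j)) (hωb : ∀ i j, ∃ C, ∀ x, |ω i j x| ≤ C)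
    (ρ ρx : Fin m → ℝ → ℝ → ℝ)
    (hcont : ∀ i, Continuous (fun p : ℝ × ℝ => ρ i p.1 p.2))
    (hx : ∀ i, ∀ x ∈ Icc (0:ℝ) 1, ∀ t ≥ (0:ℝ),
        HasDerivAt (fun x' => ρ i x' t) (ρx i x t) x)
    (ht : ∀ i, ∀ x ∈ Icc (0:ℝ) 1, ∀ t ≥ (0:ℝ),
        HasDerivAt (fun t' => ρ i x t')
          (σ i * ρx i x t +
            ∑ j ∈ Finset.univ.filter (fun j => j < i), ω i j x * ρ j x t) t)
    (hbc : ∀ i, ∀ t ≥ (0:ℝ), ρ i 1 t = 0) :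
    ∀ i, ∀ t ≥ 1 / σ ⟨m - 1, by omega⟩, ∀ x ∈ Icc (0:ℝ) 1, ρ i x t = 0 := by
  have key : ∀ n : ℕ, ∀ i : Fin m, (i : ℕ) < n →
      ∀ x ∈ Icc (0:ℝ) 1, ∀ t : ℝ, 1 - x ≤ σ i * t → ρ i x t = 0 := by
    intro n
    induction n with
    | zero => intro i h; omega
    | succ n IHn =>
      intro i hi
      by_cases hcase : (i : ℕ) < n
      · exact IHn i hcase
      have hin : (i : ℕ) = n := by omega
      have IH : ∀ j : Fin m, j < i →
          ∀ x ∈ Icc (0:ℝ) 1, ∀ t : ℝ, 1 - x ≤ σ j * t → ρ j x t = 0 := by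
        intro j hj
        have hjv : (j : ℕ) < (i : ℕ) := hj
        exact IHn j (by omega)
      intro x hxm
      have hσi : 0 < σ i := hpos i
      -- the speed bound τ from the previous component
      have him : (i : ℕ) - 1 < m := by omega
      set τ : ℝ := σ ⟨(i : ℕ) - 1, him⟩ with hτdef
      have hτ : σ i ≤ τ := by
        rcases Nat.eq_zero_or_pos (i : ℕ) with h0 | h0
        · have he : (⟨(i : ℕ) - 1, him⟩ : Fin m) = i :=
            Fin.ext (show (i : ℕ) - 1 = (i : ℕ) by omega)
          rw [hτdef]
          exact (congrArg σ he).ge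
        · refine le_of_lt (hdec ⟨(i : ℕ) - 1, him⟩ i ?_)
          rw [Fin.lt_def]
          show (i : ℕ) - 1 < (i : ℕ)
          omega
      have hτj : ∀ j : Fin m, j < i → τ ≤ σ j := by
        intro j hj
        have hjv : (j : ℕ) < (i : ℕ) := hj
        by_cases hje : (j : ℕ) = (i : ℕ) - 1
        · have he : (⟨(i : ℕ) - 1, him⟩ : Fin m) = j :=
            Fin.ext (show (i : ℕ) - 1 = (j : ℕ) by omega)
          rw [hτdef]
          exact (congrArg σ he).le
        · refine le_of_lt (hdec j ⟨(i : ℕ) - 1, him⟩ ?_)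
          rw [Fin.lt_def]
          show (j : ℕ) < (i : ℕ) - 1
          omega
      have hτp : 0 < τ := by rw [hτdef]; exact hpos _
      -- vanishing of the source term on the relevant region
      have hS : ∀ x' ∈ Icc (0:ℝ) 1, ∀ t' : ℝ, 1 - x' ≤ τ * t' →
          (∑ j ∈ Finset.univ.filter (fun j => j < i), ω i j x' * ρ j x' t') = 0 := by
        intro x' hx' t' hct
        apply Finset.sum_eq_zero
        intro j hj
        have hji : j < i := (Finset.mem_filter.mp hj).2
        have ht'0 : 0 ≤ t' := by nlinarith [hx'.2, hτp]
        have : 1 - x' ≤ σ j * t' :=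
          le_trans hct (mul_le_mul_of_nonneg_right (hτj j hji) ht'0)
        rw [IH j hji x' hx' t' this, mul_zero]
      -- the strict-inequality case
      have strict : ∀ t0 : ℝ, 1 - x < σ i * t0 → ρ i x t0 = 0 := by
        intro t0 hlt
        have ht0p : 0 < t0 := by nlinarith [hxm.2]
        have hr0 : 0 < t0 - (1 - x) / σ i := by
          rw [sub_pos, div_lt_iff₀ hσi]
          linarith [mul_comm (σ i) t0]
        -- uniform bound for ρ i on the rectangle
        obtain ⟨C, hC⟩ := ((isCompact_Icc.prod isCompact_Icc :
            IsCompact (Icc (0:ℝ) 1 ×ˢ Icc (0:ℝ) t0))).exists_bound_of_continuousOn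
            (hcont i).continuousOn
        set M : ℝ := max C 0 with hMdef
        have hM : 0 ≤ M := le_max_right _ _
        have hMb : ∀ x' ∈ Icc (0:ℝ) 1, ∀ t' ∈ Icc (0:ℝ) t0, |ρ i x' t'| ≤ M := by
          intro x' hx' t' ht'
          have := hC (x', t') (mem_prod.mpr ⟨hx', ht'⟩)
          calc |ρ i x' t'| ≤ C := this
            _ ≤ M := le_max_left _ _
        -- derivative hypotheses on the region
        have hux : ∀ x' ∈ Icc (0:ℝ) 1, ∀ t' ∈ Icc (0:ℝ) t0,
            HasDerivAt (fun y => ρ i y t') (ρx i x' t') x' :=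
          fun x' hx' t' ht' => hx i x' hx' t' ht'.1
        have hut : ∀ x' ∈ Icc (0:ℝ) 1, ∀ t' ∈ Icc (0:ℝ) t0, 1 - x' ≤ τ * t' →
            HasDerivAt (fun s => ρ i x' s) (σ i * ρx i x' t') t' := by
          intro x' hx' t' ht' hct
          have h1 := ht i x' hx' t' ht'.1
          rw [hS x' hx' t' hct, add_zero] at h1
          exact h1
        have hbcT : ∀ t' ∈ Icc (0:ℝ) t0, ρ i 1 t' = 0 := fun t' ht' => hbc i t' ht'.1
        have hmemt : t0 ∈ Icc (0:ℝ) t0 := ⟨ht0p.le, le_refl _⟩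
        have hct0 : 1 - x ≤ τ * t0 := by nlinarith
        -- apply the core estimate for ρ and -ρ, for every K and ε
        have up : ∀ K : ℝ, 0 ≤ K → ∀ ε : ℝ, 0 < ε →
            ρ i x t0 ≤ M * Real.exp (-K * (t0 - (1 - x) / σ i)) + ε * t0 := by
          intro K hK ε hε
          exact core' hσi hτ hM hK hε (hcont i) hux hut
            (fun x' hx' t' ht' => (abs_le.mp (hMb x' hx' t' ht')).2) hbcT
            x hxm t0 hmemt hct0
        have dn : ∀ K : ℝ, 0 ≤ K → ∀ ε : ℝ, 0 < ε →
            -ρ i x t0 ≤ M * Real.exp (-K * (t0 - (1 - x) / σ i)) + ε * t0 := by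
          intro K hK ε hε
          refine core' hσi hτ hM hK hε (hcont i).neg
            (fun x' hx' t' ht' => (hux x' hx' t' ht').neg)
            (fun x' hx' t' ht' hct => ?_)
            (fun x' hx' t' ht' => by
              show -ρ i x' t' ≤ M
              have := (abs_le.mp (hMb x' hx' t' ht')).1; linarith)
            (fun t' ht' => by show -ρ i 1 t' = 0; rw [hbcT t' ht']; ring)
            x hxm t0 hmemt hct0
          have h2 := (hut x' hx' t' ht' hct).neg
          refine h2.congr_deriv ?_
          ring
        -- remove ε
        have up2 : ∀ K : ℝ, 0 ≤ K →
            ρ i x t0 ≤ M * Real.exp (-K * (t0 - (1 - x) / σ i)) := by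
          intro K hK
          refine le_of_forall_pos_le_add ?_
          intro ε hε
          have hd : 0 < ε / (t0 + 1) := div_pos hε (by linarith)
          have h1 := up K hK (ε / (t0 + 1)) hd
          have h2 : ε / (t0 + 1) * t0 ≤ ε := by
            rw [div_mul_eq_mul_div, div_le_iff₀ (by linarith)]
            nlinarith
          linarith
        have dn2 : ∀ K : ℝ, 0 ≤ K →
            -ρ i x t0 ≤ M * Real.exp (-K * (t0 - (1 - x) / σ i)) := by
          intro K hK
          refine le_of_forall_pos_le_add ?_
          intro ε hε
          have hd : 0 < ε / (t0 + 1) := div_pos hε (by linarith)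
          have h1 := dn K hK (ε / (t0 + 1)) hd
          have h2 : ε / (t0 + 1) * t0 ≤ ε := by
            rw [div_mul_eq_mul_div, div_le_iff₀ (by linarith)]
            nlinarith
          linarith
        -- let K → ∞
        have htend : Tendsto (fun K : ℝ => M * Real.exp (-K * (t0 - (1 - x) / σ i)))
            atTop (nhds 0) := by
          have h1 : Tendsto (fun K : ℝ => -K * (t0 - (1 - x) / σ i)) atTop atBot := by
            have h0 : Tendsto (fun K : ℝ => -(t0 - (1 - x) / σ i) * K) atTop atBot :=
              tendsto_id.const_mul_atTop_of_neg (neg_neg_of_pos hr0)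
            have heqf : (fun K : ℝ => -K * (t0 - (1 - x) / σ i))
                = fun K : ℝ => -(t0 - (1 - x) / σ i) * K := by
              funext K; ring
            rw [heqf]
            exact h0
          have h2 := Real.tendsto_exp_atBot.comp h1
          have h3 := h2.const_mul M
          simpa using h3
        have hle : ρ i x t0 ≤ 0 := by
          refine ge_of_tendsto htend ?_
          filter_upwards [eventually_ge_atTop (0:ℝ)] with K hK
          exact up2 K hK
        have hge : -ρ i x t0 ≤ 0 := by
          refine ge_of_tendsto htend ?_
          filter_upwards [eventually_ge_atTop (0:ℝ)] with K hK
          exact dn2 K hK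
        linarith
      -- now the general (possibly boundary) case by continuity
      intro t hgoal
      by_cases hs : 1 - x < σ i * t
      · exact strict t hs
      have heq : 1 - x = σ i * t := le_antisymm hgoal (not_lt.mp hs)
      have hz : ∀ n : ℕ, ρ i x (t + 1 / (n + 1)) = 0 := by
        intro n
        apply strict
        have : 0 < σ i * (1 / ((n : ℝ) + 1)) := by positivity
        calc 1 - x = σ i * t := heq
          _ < σ i * t + σ i * (1 / ((n : ℝ) + 1)) := by linarith
          _ = σ i * (t + 1 / ((n : ℝ) + 1)) := by ring
      have hcx : Continuous fun s : ℝ => ρ i x s :=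
        (hcont i).comp (continuous_const.prodMk continuous_id)
      have hts : Tendsto (fun n : ℕ => t + 1 / ((n : ℝ) + 1)) atTop (nhds t) := by
        have := tendsto_one_div_add_atTop_nhds_zero_nat (𝕜 := ℝ)
        simpa using tendsto_const_nhds.add this
      have hlim : Tendsto (fun n : ℕ => ρ i x (t + 1 / ((n : ℝ) + 1))) atTop
          (nhds (ρ i x t)) := (hcx.tendsto t).comp hts
      have hlim0 : Tendsto (fun n : ℕ => ρ i x (t + 1 / ((n : ℝ) + 1))) atTop (nhds 0) := by
        simp only [hz]
        exact tendsto_const_nhds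
      exact tendsto_nhds_unique hlim hlim0
  -- conclude the theorem
  intro i t htl x hxm
  have hlast : 0 < σ ⟨m - 1, by omega⟩ := hpos _
  have hσi : σ ⟨m - 1, by omega⟩ ≤ σ i := by
    by_cases hie : (i : ℕ) = m - 1
    · have he : (⟨m - 1, by omega⟩ : Fin m) = i := Fin.ext (show m - 1 = (i : ℕ) by omega)
      exact (congrArg σ he).le
    · refine le_of_lt (hdec i ⟨m - 1, by omega⟩ ?_)
      rw [Fin.lt_def]
      show (i : ℕ) < m - 1
      have := i.isLt
      omega
  have ht0 : 0 ≤ t := le_trans (by positivity) htl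
  have h1 : 1 ≤ σ ⟨m - 1, by omega⟩ * t := by
    rw [ge_iff_le, div_le_iff₀ hlast] at htl
    linarith [mul_comm t (σ ⟨m - 1, by omega⟩)]
  have h2 : σ ⟨m - 1, by omega⟩ * t ≤ σ i * t := mul_le_mul_of_nonneg_right hσi ht0
  exact key ((i : ℕ) + 1) i (by omega) x hxm t (by linarith [hxm.1])
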